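/- The conditional distribution of μ given X is Gaussian with the conjugate-update parameters: for almost every realization x of X, the conditional law of μ given X = x is N( (σ⁻²·x + ϱ0⁻¹·m0) / (σ⁻²·t + ϱ0⁻¹), 1/(σ⁻²·t + ϱ0⁻¹) ). -/

import Mathlib

open MeasureTheory ProbabilityTheory

noncomputable section
open Real

lemma measurable_gaussianPDF_pair (a b : ℝ) (w : NNReal) :
    Measurable fun z : ℝ × ℝ => gaussianPDF (z.1 * a + b) w z.2 := by
  unfold gaussianPDF gaussianPDFReal
  fun_prop

lemma measurable_gaussianReal_affine (a b : ℝ) (w : NNReal) :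
    Measurable fun x : ℝ => gaussianReal (x * a + b) w := by
  rcases eq_or_ne w 0 with rfl | hw
  · simp only [gaussianReal_zero_var]
    exact Measure.measurable_dirac.comp (by fun_prop)
  · refine Measure.measurable_of_measurable_coe _ fun s hs => ?_
    simp_rw [gaussianReal_apply _ hw s, ← lintegral_indicator hs]
    exact Measurable.lintegral_prod_right' (f := fun z : ℝ × ℝ =>
      s.indicator (gaussianPDF (z.1 * a + b) w) z.2)
      (((measurable_gaussianPDF_pair a b w).indicator (measurable_snd hs)))

/-- Gaussian kernel with affine mean. -/
def gaussAffineKernel (a b : ℝ) (w : NNReal) : ProbabilityTheory.Kernel ℝ ℝ :=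
  ⟨fun x => gaussianReal (x * a + b) w, measurable_gaussianReal_affine a b w⟩

@[simp] lemma gaussAffineKernel_apply (a b : ℝ) (w : NNReal) (x : ℝ) :
    gaussAffineKernel a b w x = gaussianReal (x * a + b) w := rfl

instance (a b : ℝ) (w : NNReal) : IsMarkovKernel (gaussAffineKernel a b w) :=
  ⟨fun _ => by rw [gaussAffineKernel_apply]; infer_instance⟩

lemma compProd_gaussAffine (m a b : ℝ) (v w : NNReal) (hv : v ≠ 0) (hw : w ≠ 0) :
    gaussianReal m v ⊗ₘ gaussAffineKernel a b w
      = ((volume : Measure ℝ).prod volume).withDensity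
          (fun z => gaussianPDF m v z.1 * gaussianPDF (z.1 * a + b) w z.2) := by
  have hgw := measurable_gaussianPDF_pair a b w
  have hgv := measurable_gaussianPDF m v
  have hf : Measurable fun z : ℝ × ℝ => gaussianPDF m v z.1 * gaussianPDF (z.1 * a + b) w z.2 :=
    (hgv.comp measurable_fst).mul hgw
  ext s hs
  rw [Measure.compProd_apply hs, withDensity_apply _ hs, ← lintegral_indicator hs,
    lintegral_prod _ (hf.indicator hs).aemeasurable]
  simp_rw [gaussAffineKernel_apply, gaussianReal_apply _ hw,
    ← lintegral_indicator (measurable_prodMk_left hs)]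
  rw [gaussianReal_of_var_ne_zero m hv,
    lintegral_withDensity_eq_lintegral_mul _ hgv
      (Measurable.lintegral_prod_right' (f := fun z : ℝ × ℝ =>
        (Prod.mk z.1 ⁻¹' s).indicator (gaussianPDF (z.1 * a + b) w) z.2)
        (hgw.indicator (measurable_fst.prodMk measurable_snd hs)))]
  congr 1
  funext u
  simp only [Pi.mul_apply]
  have hm : Measurable ((Prod.mk u ⁻¹' s).indicator (gaussianPDF (u * a + b) w)) :=
    (measurable_gaussianPDF _ _).indicator (measurable_prodMk_left hs)
  rw [← lintegral_const_mul _ hm]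
  congr 1
  funext x
  by_cases hx : (u, x) ∈ s <;> simp [Set.indicator, hx]

lemma map_swap_withDensity {f : ℝ × ℝ → ENNReal} (hf : Measurable f) :
    Measure.map Prod.swap (((volume : Measure ℝ).prod volume).withDensity f)
      = ((volume : Measure ℝ).prod volume).withDensity (fun z => f z.swap) := by
  ext s hs
  rw [Measure.map_apply measurable_swap hs, withDensity_apply _ (measurable_swap hs),
    withDensity_apply _ hs]
  have h1 : ((volume : Measure ℝ).prod volume)
      = Measure.map Prod.swap ((volume : Measure ℝ).prod volume) := Measure.prod_swap.symm
  conv_rhs => rw [h1]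
  have h2 := setLIntegral_map (μ := (volume : Measure ℝ).prod volume) (f := f ∘ Prod.swap) hs (hf.comp measurable_swap) measurable_swap
  simp only [Function.comp, Prod.swap_swap] at h2
  rw [h2]

lemma gaussianPDFReal_bayes (σ t m0 ϱ0 : ℝ) (hσ : 0 < σ) (ht : 0 < t) (hϱ0 : 0 < ϱ0) (u x : ℝ) :
    gaussianPDFReal m0 ϱ0.toNNReal u * gaussianPDFReal (u * t) (σ ^ 2 * t).toNNReal x
      = gaussianPDFReal (m0 * t) (t * (ϱ0 * t + σ ^ 2)).toNNReal x
        * gaussianPDFReal (x * ((σ ^ 2)⁻¹ / ((σ ^ 2)⁻¹ * t + ϱ0⁻¹))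
            + ϱ0⁻¹ * m0 / ((σ ^ 2)⁻¹ * t + ϱ0⁻¹)) (1 / ((σ ^ 2)⁻¹ * t + ϱ0⁻¹)).toNNReal u := by
  have hσ2 : 0 < σ ^ 2 := by positivity
  have hτ : 0 < (σ ^ 2)⁻¹ * t + ϱ0⁻¹ := by positivity
  have hv1 : 0 < σ ^ 2 * t := by positivity
  have hvM : 0 < t * (ϱ0 * t + σ ^ 2) := by positivity
  have hvp : 0 < 1 / ((σ ^ 2)⁻¹ * t + ϱ0⁻¹) := by positivity
  unfold gaussianPDFReal
  rw [Real.coe_toNNReal _ hϱ0.le, Real.coe_toNNReal _ hv1.le, Real.coe_toNNReal _ hvM.le,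
    Real.coe_toNNReal _ hvp.le]
  rw [mul_mul_mul_comm, mul_mul_mul_comm ((√(2 * π * (t * (ϱ0 * t + σ ^ 2))))⁻¹),
    ← Real.exp_add, ← Real.exp_add, ← mul_inv, ← mul_inv,
    ← Real.sqrt_mul (by positivity), ← Real.sqrt_mul (by positivity)]
  congr 2
  · field_simp
  · field_simp
    ring

lemma swap_gauss_compProd (σ t m0 ϱ0 : ℝ) (hσ : 0 < σ) (ht : 0 < t) (hϱ0 : 0 < ϱ0) :
    Measure.map Prod.swap
        (gaussianReal m0 ϱ0.toNNReal ⊗ₘ gaussAffineKernel t 0 (σ ^ 2 * t).toNNReal)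
      = gaussianReal (m0 * t) (t * (ϱ0 * t + σ ^ 2)).toNNReal ⊗ₘ
          gaussAffineKernel ((σ ^ 2)⁻¹ / ((σ ^ 2)⁻¹ * t + ϱ0⁻¹))
            (ϱ0⁻¹ * m0 / ((σ ^ 2)⁻¹ * t + ϱ0⁻¹)) (1 / ((σ ^ 2)⁻¹ * t + ϱ0⁻¹)).toNNReal := by
  have hτ : 0 < (σ ^ 2)⁻¹ * t + ϱ0⁻¹ := by positivity
  have hv0 : ϱ0.toNNReal ≠ 0 := (Real.toNNReal_pos.mpr hϱ0).ne'
  have hv1 : (σ ^ 2 * t).toNNReal ≠ 0 := (Real.toNNReal_pos.mpr (by positivity)).ne'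
  have hvM : (t * (ϱ0 * t + σ ^ 2)).toNNReal ≠ 0 := (Real.toNNReal_pos.mpr (by positivity)).ne'
  have hvp : (1 / ((σ ^ 2)⁻¹ * t + ϱ0⁻¹)).toNNReal ≠ 0 :=
    (Real.toNNReal_pos.mpr (by positivity)).ne'
  rw [compProd_gaussAffine _ _ _ _ _ hv0 hv1, compProd_gaussAffine _ _ _ _ _ hvM hvp,
    map_swap_withDensity (f := fun z : ℝ × ℝ =>
      gaussianPDF m0 ϱ0.toNNReal z.1 * gaussianPDF (z.1 * t + 0) (σ ^ 2 * t).toNNReal z.2)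
      (((measurable_gaussianPDF _ _).comp measurable_fst).mul
      (measurable_gaussianPDF_pair _ _ _))]
  congr 1
  funext z
  simp only [Prod.fst_swap, Prod.snd_swap, add_zero]
  unfold gaussianPDF
  rw [← ENNReal.ofReal_mul (gaussianPDFReal_nonneg _ _ _),
    ← ENNReal.ofReal_mul (gaussianPDFReal_nonneg _ _ _)]
  exact congrArg ENNReal.ofReal (gaussianPDFReal_bayes σ t m0 ϱ0 hσ ht hϱ0 z.2 z.1)


/-- Gaussian conjugate update. If `μ ∼ N(m0, ϱ0)` and, conditionally on `μ`,
`X ∼ N(μ·t, σ²·t)`, then the conditional law of `μ` given `X = x` is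
`N((σ⁻²x + ϱ0⁻¹m0)/(σ⁻²t + ϱ0⁻¹), 1/(σ⁻²t + ϱ0⁻¹))` for a.e. `x` under the law of `X`. -/
theorem gaussian_conjugate_posterior
    {Ω : Type*} [MeasurableSpace Ω] [StandardBorelSpace Ω] [Nonempty Ω]
    (P : Measure Ω) [IsProbabilityMeasure P]
    (σ t m0 ϱ0 : ℝ) (hσ : 0 < σ) (ht : 0 < t) (hϱ0 : 0 < ϱ0)
    (μ X : Ω → ℝ) (hμ : Measurable μ) (hX : Measurable X)
    (hprior : P.map μ = gaussianReal m0 ϱ0.toNNReal)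
    (hlik : ∀ᵐ u ∂(P.map μ), condDistrib X μ P u = gaussianReal (u * t) (σ ^ 2 * t).toNNReal) :
    ∀ᵐ x ∂(P.map X), condDistrib μ X P x
      = gaussianReal (((σ ^ 2)⁻¹ * x + ϱ0⁻¹ * m0) / ((σ ^ 2)⁻¹ * t + ϱ0⁻¹))
          (1 / ((σ ^ 2)⁻¹ * t + ϱ0⁻¹)).toNNReal := by
  set τ := (σ ^ 2)⁻¹ * t + ϱ0⁻¹ with hτdef
  have hτ : 0 < τ := by positivity
  set post := gaussAffineKernel ((σ ^ 2)⁻¹ / τ) (ϱ0⁻¹ * m0 / τ) (1 / τ).toNNReal with hpost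
  haveI : IsProbabilityMeasure (P.map fun ω => (μ ω, X ω)) :=
    Measure.isProbabilityMeasure_map (hμ.prodMk hX).aemeasurable
  have hfst : (P.map fun ω => (μ ω, X ω)).fst = P.map μ :=
    Measure.fst_map_prodMk₀ hX.aemeasurable
  have h1 : P.map (fun ω => (μ ω, X ω)) = P.map μ ⊗ₘ condDistrib X μ P := by
    rw [condDistrib, ← hfst, Measure.disintegrate]
  have h2 : P.map (fun ω => (μ ω, X ω))
      = gaussianReal m0 ϱ0.toNNReal ⊗ₘ gaussAffineKernel t 0 (σ ^ 2 * t).toNNReal := by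
    rw [h1, hprior]
    refine Measure.compProd_congr ?_
    rw [hprior] at hlik
    filter_upwards [hlik] with u hu
    rw [hu, gaussAffineKernel_apply, add_zero]
  have h3 : P.map (fun ω => (X ω, μ ω))
      = Measure.map Prod.swap (P.map fun ω => (μ ω, X ω)) := by
    rw [Measure.map_map measurable_swap (hμ.prodMk hX)]
    rfl
  have h4 : P.map (fun ω => (X ω, μ ω))
      = gaussianReal (m0 * t) (t * (ϱ0 * t + σ ^ 2)).toNNReal ⊗ₘ post := by
    rw [h3, h2, swap_gauss_compProd σ t m0 ϱ0 hσ ht hϱ0]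
  have h5 : P.map X = gaussianReal (m0 * t) (t * (ϱ0 * t + σ ^ 2)).toNNReal := by
    have : P.map X = (P.map fun ω => (X ω, μ ω)).fst :=
      (Measure.fst_map_prodMk₀ hμ.aemeasurable).symm
    rw [this, h4, Measure.fst_compProd]
  have hmain := condDistrib_ae_eq_of_measure_eq_compProd X hμ.aemeasurable (κ := post) (by rw [h4, h5])
  filter_upwards [hmain] with x hx
  rw [hx, hpost, gaussAffineKernel_apply]
  congr 1
  field_simp

end
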